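/- Let L : TΓ → ℝ be the network Lagrangian associated to Hamiltonians {H_γ} and a flux limiter c_x, and for a ∈ ℝ let σ_a be the support function of the a-level sets of the Hamiltonians on TΓ. If c_x ≤ a for all vertices x, then L(x,q) + a ≥ σ_a(x,q) for all (x,q) ∈ TΓ. -/

import Mathlib

open scoped RealInnerProductSpace

/-- On a finite embedded network, if the flux limiter satisfies `c_x ≤ a`
at every vertex, then the network Lagrangian satisfies `L(x,q) + a ≥ σ_a(x,q)` for every
tangent pair `(x,q) ∈ TΓ`, where `σ_a` (with values in `EReal`, being `⊥` when the
relevant level sets are empty) is the support function of the `a`-level sets. -/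
theorem statement9
    (N : ℕ) (ι : Type) [Fintype ι] [Nonempty ι]
    (γ dγ : ι → ℝ → EuclideanSpace ℝ (Fin N))
    (hγderiv : ∀ i, ∀ s ∈ Set.Icc (0:ℝ) 1, HasDerivWithinAt (γ i) (dγ i s) (Set.Icc (0:ℝ) 1) s)
    (hγcont : ∀ i, ContinuousOn (dγ i) (Set.Icc (0:ℝ) 1))
    (hγne : ∀ i, ∀ s ∈ Set.Icc (0:ℝ) 1, dγ i s ≠ 0)
    (hγinj : ∀ i, Set.InjOn (γ i) (Set.Icc (0:ℝ) 1))
    (hsymm : ∀ i, ∃ j, (∀ s : ℝ, γ j s = γ i (1 - s)))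
    (H : ι → ℝ → ℝ → ℝ)
    (hHcont : ∀ i, Continuous (Function.uncurry (H i)))
    (hHsuper : ∀ i, ∀ M : ℝ, ∃ R : ℝ, ∀ s ∈ Set.Icc (0:ℝ) 1, ∀ μ : ℝ, R ≤ |μ| →
      M * |μ| ≤ H i s μ)
    (hHconv : ∀ i s, ConvexOn ℝ Set.univ (fun μ => H i s μ))
    (hHsymm : ∀ i, ∃ j, (∀ s : ℝ, γ j s = γ i (1 - s)) ∧ ∀ s μ : ℝ, H j s μ = H i (1 - s) (-μ))
    -- vertices
    (V : Set (EuclideanSpace ℝ (Fin N))) (hV : V = {x | ∃ i, x = γ i 0 ∨ x = γ i 1})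
    -- flux limiter and level
    (cflux : EuclideanSpace ℝ (Fin N) → ℝ) (a : ℝ)
    (hflux : ∀ x ∈ V, cflux x ≤ a)
    -- local Lagrangians (Legendre transforms of the local Hamiltonians)
    (Lloc : ι → ℝ → ℝ → ℝ)
    (hLloc : ∀ i s lam, IsGreatest {v : ℝ | ∃ μ : ℝ, v = lam * μ - H i s μ} (Lloc i s lam))
    -- network Lagrangian
    (L : EuclideanSpace ℝ (Fin N) → EuclideanSpace ℝ (Fin N) → ℝ)
    (hLint : ∀ i, ∀ s ∈ Set.Ioo (0:ℝ) 1, ∀ lam : ℝ, L (γ i s) (lam • dγ i s) = Lloc i s lam)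
    (hLvert : ∀ x ∈ V, ∀ q, q ≠ 0 → (∃ i, ∃ lam : ℝ, γ i 1 = x ∧ q = lam • dγ i 1) →
      IsLeast {v : ℝ | ∃ i, ∃ lam : ℝ, γ i 1 = x ∧ q = lam • dγ i 1 ∧ v = Lloc i 1 lam} (L x q))
    (hLzero : ∀ x ∈ V, L x 0 = -cflux x)
    -- support function of the a-level sets, with values in EReal
    (σ : EuclideanSpace ℝ (Fin N) → EuclideanSpace ℝ (Fin N) → EReal)
    (hσint : ∀ i, ∀ s ∈ Set.Ioo (0:ℝ) 1, ∀ lam : ℝ,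
      σ (γ i s) (lam • dγ i s) = sSup {v : EReal | ∃ μ : ℝ, H i s μ = a ∧ v = ((μ * lam : ℝ) : EReal)})
    (hσvert : ∀ x ∈ V, ∀ q, q ≠ 0 →
      σ x q = sInf {v : EReal | ∃ i, ∃ lam : ℝ, γ i 1 = x ∧ q = lam • dγ i 1 ∧
        v = sSup {w : EReal | ∃ μ : ℝ, H i 1 μ = a ∧ w = ((μ * lam : ℝ) : EReal)}})
    (hσzero : ∀ x ∈ V, σ x 0 = 0) :
    ∀ x q : EuclideanSpace ℝ (Fin N),
      (∃ i, ∃ s ∈ Set.Icc (0:ℝ) 1, γ i s = x ∧ ∃ lam : ℝ, q = lam • dγ i s) →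
      σ x q ≤ ((L x q + a : ℝ) : EReal) := by
  rintro x q ⟨i, s, hs, hγx, lam, hq⟩
  have key : ∀ (i : ι) (s lam : ℝ),
      sSup {v : EReal | ∃ μ : ℝ, H i s μ = a ∧ v = ((μ * lam : ℝ) : EReal)}
        ≤ ((Lloc i s lam + a : ℝ) : EReal) := by
    intro i s lam
    apply sSup_le
    rintro v ⟨μ, hμ, rfl⟩
    have h1 : lam * μ - H i s μ ≤ Lloc i s lam := (hLloc i s lam).2 ⟨μ, rfl⟩
    have h2 : μ * lam ≤ Lloc i s lam + a := by rw [mul_comm]; linarith [hμ ▸ h1]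
    exact_mod_cast h2
  -- case split on whether s is interior
  by_cases hsint : s ∈ Set.Ioo (0:ℝ) 1
  · subst hγx hq
    rw [hσint i s hsint lam, hLint i s hsint lam]
    exact key i s lam
  · -- s = 0 or s = 1, so x is a vertex
    have hs01 : s = 0 ∨ s = 1 := by
      rcases hs with ⟨h0, h1⟩
      rcases eq_or_lt_of_le h0 with h | h
      · exact Or.inl h.symm
      · rcases eq_or_lt_of_le h1 with h' | h'
        · exact Or.inr h'
        · exact absurd ⟨h, h'⟩ hsint
    have hxV : x ∈ V := by
      rw [hV]
      rcases hs01 with rfl | rfl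
      · exact ⟨i, Or.inl hγx.symm⟩
      · exact ⟨i, Or.inr hγx.symm⟩
    by_cases hq0 : q = 0
    · subst hq0
      rw [hσzero x hxV, hLzero x hxV]
      have := hflux x hxV
      have h0 : (0:ℝ) ≤ -cflux x + a := by linarith
      exact_mod_cast h0
    · -- need a witness arc ending at x
      have hex : ∃ i, ∃ lam : ℝ, γ i 1 = x ∧ q = lam • dγ i 1 := by
        rcases hs01 with rfl | rfl
        · -- s = 0 : use the reversed arc
          obtain ⟨j, hj⟩ := hsymm i
          have hγj1 : γ j 1 = x := by rw [hj 1]; simpa using hγx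
          -- dγ j 1 = -(dγ i 0)
          have hmem1 : (1:ℝ) ∈ Set.Icc (0:ℝ) 1 := by norm_num
          have hmem0 : (0:ℝ) ∈ Set.Icc (0:ℝ) 1 := by norm_num
          have hinner : HasDerivWithinAt (fun t : ℝ => 1 - t) (-1 : ℝ)
              (Set.Icc (0:ℝ) 1) 1 := by
            simpa using ((hasDerivAt_id' (1:ℝ)).const_sub (1:ℝ)).hasDerivWithinAt
          have hmaps : Set.MapsTo (fun t : ℝ => 1 - t) (Set.Icc (0:ℝ) 1) (Set.Icc (0:ℝ) 1) := by
            intro t ht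
            simp only [Set.mem_Icc]
            exact ⟨by linarith [ht.2], by linarith [ht.1]⟩
          have houter : HasDerivWithinAt (γ i) (dγ i 0) (Set.Icc (0:ℝ) 1)
              ((fun t : ℝ => 1 - t) 1) := by
            simpa using hγderiv i 0 hmem0
          have hcomp : HasDerivWithinAt (fun t : ℝ => γ i (1 - t)) ((-1 : ℝ) • dγ i 0)
              (Set.Icc (0:ℝ) 1) 1 := HasDerivWithinAt.scomp 1 houter hinner hmaps
          have hj' : HasDerivWithinAt (fun t : ℝ => γ i (1 - t)) (dγ j 1)
              (Set.Icc (0:ℝ) 1) 1 := by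
            have := hγderiv j 1 hmem1
            convert this using 1
            funext t
            exact (hj t).symm
          have hud : UniqueDiffWithinAt ℝ (Set.Icc (0:ℝ) 1) 1 :=
            (uniqueDiffOn_Icc one_pos) 1 hmem1
          have heq : dγ j 1 = (-1 : ℝ) • dγ i 0 := by
            rw [← hj'.derivWithin hud, ← hcomp.derivWithin hud]
          refine ⟨j, -lam, hγj1, ?_⟩
          rw [hq, heq]
          simp [smul_smul]
        · exact ⟨i, lam, hγx, hq⟩
      have hL := hLvert x hxV q hq0 hex
      obtain ⟨i₀, lam₀, h1, h2, h3⟩ := hL.1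
      rw [hσvert x hxV q hq0]
      refine le_trans (sInf_le ⟨i₀, lam₀, h1, h2, rfl⟩) ?_
      rw [h3]
      exact key i₀ 1 lam₀
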